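/- arXiv:2210.07086 — 2 statements merged into one kernel-verified Lean document; each statement's English description precedes it below -/
import Mathlib

section
/- Under the stated hypotheses, suppose I + R_x is invertible for all x in an open interval J ⊆ (0,∞), and define the N×N-matrix-valued function T(x,y) = −C·exp(−xA)·(I + R_x)⁻¹·exp(−yA)·B for x ∈ J, y > 0. Then T is twice differentiable in each variable, the diagonal function D(x) = T(x,x) is differentiable, and T satisfies the partial differential equation ∂²T/∂x²(x,y) − ∂²T/∂y²(x,y) = −2·D′(x)·T(x,y) for x ∈ J, y > x (matrix product on the right-hand side). -/
open MeasureTheory Set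

set_option synthInstance.maxHeartbeats 1000000
set_option maxHeartbeats 1000000


open MeasureTheory

/-- The semigroup `exp(-tA)` generated by a bounded operator `A`. -/
noncomputable def expA {H : Type*} [NormedAddCommGroup H] [InnerProductSpace ℂ H]
    [CompleteSpace H] (A : H →L[ℂ] H) (t : ℝ) : H →L[ℂ] H :=
  NormedSpace.exp ((-(t : ℂ)) • A)

/-- `R_x = ∫_x^∞ exp(-tA)·BC·exp(-tA) dt` as a Bochner integral. -/
noncomputable def Rop {H : Type*} [NormedAddCommGroup H] [InnerProductSpace ℂ H]
    [CompleteSpace H] (A : H →L[ℂ] H) (BC : H →L[ℂ] H) (x : ℝ) : H →L[ℂ] H :=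
  ∫ t in Set.Ioi x, expA A t * BC * expA A t

section Aux

variable {H : Type*} [NormedAddCommGroup H] [InnerProductSpace ℂ H] [CompleteSpace H]
  (A : H →L[ℂ] H)

lemma expA_eq (t : ℝ) : expA A t = NormedSpace.exp (t • (-A)) := by
  rw [expA]
  congr 1
  rw [smul_neg, ← neg_smul, ← Complex.coe_smul]
  norm_cast

lemma commA (t : ℝ) : A * expA A t = expA A t * A := by
  have : Commute A (expA A t) := by
    rw [expA_eq]
    exact ((Commute.refl A).neg_right.smul_right t).exp_right
  exact this.eq

lemma hasDerivAt_expA (t : ℝ) : HasDerivAt (expA A) (-(A * expA A t)) t := by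
  have h := hasDerivAt_exp_smul_const (𝕂 := ℝ) (-A) t
  have hfun : (fun u : ℝ => NormedSpace.exp (u • (-A))) = expA A :=
    funext fun u => (expA_eq A u).symm
  rw [hfun, ← expA_eq] at h
  have hval : expA A t * -A = -(A * expA A t) := by
    rw [mul_neg, commA]
  rwa [hval] at h

lemma continuous_expA : Continuous (expA A) := by
  have : Continuous (fun t : ℝ => NormedSpace.exp (t • (-A))) :=
    (continuous_iff_continuousAt.2 fun t => (hasDerivAt_expA A t).continuousAt).congr
      fun t => expA_eq A t
  convert this using 1
  exact funext fun t => expA_eq A t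

variable (K : H →L[ℂ] H) {M ε : ℝ}

lemma norm_EKE_le (hM : 0 < M) (hε : 0 < ε)
    (hdecay : ∀ t : ℝ, 0 ≤ t → ‖expA A t‖ ≤ M * Real.exp (-ε * t))
    {t : ℝ} (ht : 0 ≤ t) :
    ‖expA A t * K * expA A t‖ ≤ M * M * ‖K‖ * Real.exp (-(2 * ε) * t) := by
  have hd := hdecay t ht
  have hexp : Real.exp (-ε * t) * Real.exp (-ε * t) = Real.exp (-(2 * ε) * t) := by
    rw [← Real.exp_add]; congr 1; ring
  calc ‖expA A t * K * expA A t‖ ≤ ‖expA A t * K‖ * ‖expA A t‖ := norm_mul_le _ _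
    _ ≤ ‖expA A t‖ * ‖K‖ * ‖expA A t‖ :=
        mul_le_mul_of_nonneg_right (norm_mul_le _ _) (norm_nonneg _)
    _ ≤ (M * Real.exp (-ε * t)) * ‖K‖ * (M * Real.exp (-ε * t)) := by
        have h1 : (0:ℝ) ≤ M * Real.exp (-ε * t) := by positivity
        gcongr
    _ = M * M * ‖K‖ * (Real.exp (-ε * t) * Real.exp (-ε * t)) := by ring
    _ = M * M * ‖K‖ * Real.exp (-(2 * ε) * t) := by rw [hexp]

lemma integrableOn_EKE (hM : 0 < M) (hε : 0 < ε)
    (hdecay : ∀ t : ℝ, 0 ≤ t → ‖expA A t‖ ≤ M * Real.exp (-ε * t)) (x : ℝ) :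
    IntegrableOn (fun t => expA A t * K * expA A t) (Ioi x) := by
  have hcont : Continuous (fun t => expA A t * K * expA A t) :=
    ((continuous_expA A).mul continuous_const).mul (continuous_expA A)
  have h2ε : (0:ℝ) < 2 * ε := by linarith
  have h0 : IntegrableOn (fun t => expA A t * K * expA A t) (Ioi (max x 0)) := by
    apply Integrable.mono'
      ((exp_neg_integrableOn_Ioi (max x 0) h2ε).const_mul (M * M * ‖K‖))
    · exact hcont.aestronglyMeasurable.restrict
    · filter_upwards [ae_restrict_mem measurableSet_Ioi] with t ht
      exact norm_EKE_le A K hM hε hdecay ((le_max_right _ _).trans ht.le)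
  have h1 : IntegrableOn (fun t => expA A t * K * expA A t) (Ioc x (max x 0)) :=
    (hcont.integrableOn_Icc).mono_set Ioc_subset_Icc_self
  have := h1.union h0
  rwa [Ioc_union_Ioi_eq_Ioi (le_max_left x 0)] at this

lemma hasDerivAt_Rop (hM : 0 < M) (hε : 0 < ε)
    (hdecay : ∀ t : ℝ, 0 ≤ t → ‖expA A t‖ ≤ M * Real.exp (-ε * t)) (x₀ : ℝ) :
    HasDerivAt (Rop A K) (-(expA A x₀ * K * expA A x₀)) x₀ := by
  set h : ℝ → (H →L[ℂ] H) := fun t => expA A t * K * expA A t with hh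
  have hcont : Continuous h :=
    ((continuous_expA A).mul continuous_const).mul (continuous_expA A)
  have hInt : ∀ x : ℝ, IntegrableOn h (Ioi x) := integrableOn_EKE A K hM hε hdecay
  have key : ∀ z ∈ Ioi (x₀ - 1),
      Rop A K z = Rop A K (x₀ - 1) - ∫ t in (x₀ - 1)..z, h t := by
    intro z hz
    have hle : x₀ - 1 ≤ z := le_of_lt hz
    have hsplit : (∫ t in Ioi (x₀ - 1), h t)
        = (∫ t in Ioc (x₀ - 1) z, h t) + ∫ t in Ioi z, h t := by
      rw [← setIntegral_union (Ioc_disjoint_Ioi le_rfl) measurableSet_Ioi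
        ((hInt (x₀ - 1)).mono_set Ioc_subset_Ioi_self) (hInt z),
        Ioc_union_Ioi_eq_Ioi hle]
    have hRz : Rop A K z = ∫ t in Ioi z, h t := rfl
    have hRa : Rop A K (x₀ - 1) = ∫ t in Ioi (x₀ - 1), h t := rfl
    rw [hRz, hRa, hsplit, intervalIntegral.integral_of_le hle]
    abel
  have hD : HasDerivAt (fun z => Rop A K (x₀ - 1) - ∫ t in (x₀ - 1)..z, h t)
      (-(h x₀)) x₀ := by
    have h1 := intervalIntegral.integral_hasDerivAt_right (f := h)
      (hcont.intervalIntegrable (x₀ - 1) x₀)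
      (hcont.stronglyMeasurableAtFilter volume (nhds x₀))
      hcont.continuousAt
    exact h1.const_sub (Rop A K (x₀ - 1))
  refine hD.congr_of_eventuallyEq ?_
  filter_upwards [Ioi_mem_nhds (by linarith : x₀ - 1 < x₀)] with z hz
  exact key z hz

lemma tendsto_EKE (hM : 0 < M) (hε : 0 < ε)
    (hdecay : ∀ t : ℝ, 0 ≤ t → ‖expA A t‖ ≤ M * Real.exp (-ε * t)) :
    Filter.Tendsto (fun t => expA A t * K * expA A t) Filter.atTop (nhds 0) := by
  have h2ε : (0:ℝ) < 2 * ε := by linarith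
  have h1 : Filter.Tendsto (fun t : ℝ => (2 * ε) * t) Filter.atTop Filter.atTop :=
    Filter.Tendsto.const_mul_atTop h2ε Filter.tendsto_id
  have h2 : Filter.Tendsto (fun t : ℝ => Real.exp (-(2 * ε * t))) Filter.atTop (nhds 0) :=
    Real.tendsto_exp_neg_atTop_nhds_zero.comp h1
  have h3 : Filter.Tendsto (fun t : ℝ => M * M * ‖K‖ * Real.exp (-(2 * ε) * t))
      Filter.atTop (nhds (M * M * ‖K‖ * 0)) := by
    apply Filter.Tendsto.const_mul
    convert h2 using 2 with t
    ring_nf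
  rw [mul_zero] at h3
  apply squeeze_zero_norm' _ h3
  filter_upwards [Filter.eventually_ge_atTop (0:ℝ)] with t ht
  exact norm_EKE_le A K hM hε hdecay ht

lemma star_Rop (hM : 0 < M) (hε : 0 < ε)
    (hdecay : ∀ t : ℝ, 0 ≤ t → ‖expA A t‖ ≤ M * Real.exp (-ε * t)) (x : ℝ) :
    A * Rop A K x + Rop A K x * A = expA A x * K * expA A x := by
  set h : ℝ → (H →L[ℂ] H) := fun t => expA A t * K * expA A t with hh
  have hInt : ∀ x : ℝ, IntegrableOn h (Ioi x) := integrableOn_EKE A K hM hε hdecay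
  have hd : ∀ t : ℝ, HasDerivAt h (-(A * h t + h t * A)) t := by
    intro t
    have h2 := ((hasDerivAt_expA A t).mul_const K).mul (hasDerivAt_expA A t)
    have hc : (expA A t * K) * -(A * expA A t) = -((expA A t * K * expA A t) * A) := by
      rw [mul_neg, commA]; noncomm_ring
    rw [hc] at h2
    refine h2.congr_deriv (Eq.symm ?_)
    show -(A * (expA A t * K * expA A t) + (expA A t * K * expA A t) * A) = _
    noncomm_ring
  -- integrability of the derivative pieces
  have hL : IntegrableOn (fun t => A * h t) (Ioi x) :=
    (ContinuousLinearMap.mul ℂ (H →L[ℂ] H) A).integrable_comp (hInt x)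
  have hRg : IntegrableOn (fun t => h t * A) (Ioi x) :=
    ((ContinuousLinearMap.mul ℂ (H →L[ℂ] H)).flip A).integrable_comp (hInt x)
  have hint' : IntegrableOn (fun t => -(A * h t + h t * A)) (Ioi x) := (hL.add hRg).neg
  have hFTC := integral_Ioi_of_hasDerivAt_of_tendsto' (a := x)
    (fun t _ => hd t) hint' (tendsto_EKE A K hM hε hdecay)
  have e1 : (∫ t in Ioi x, A * h t) = A * Rop A K x := by
    have := (ContinuousLinearMap.mul ℂ (H →L[ℂ] H) A).integral_comp_comm (hInt x)
    simp at this; exact this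
  have e2 : (∫ t in Ioi x, h t * A) = Rop A K x * A := by
    have := ((ContinuousLinearMap.mul ℂ (H →L[ℂ] H)).flip A).integral_comp_comm (hInt x)
    simp at this; exact this
  have e3 : (∫ t in Ioi x, -(A * h t + h t * A))
      = -(A * Rop A K x + Rop A K x * A) := by
    rw [integral_neg, integral_add hL hRg, e1, e2]
  rw [e3, zero_sub, neg_inj] at hFTC
  exact hFTC

lemma hasDerivAt_ring_inverse_comp {R : Type*} [NormedRing R] [NormedAlgebra ℂ R]
    [CompleteSpace R] {u : ℝ → R} {u' : R} {x : ℝ}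
    (hu : HasDerivAt u u' x) (hux : IsUnit (u x)) :
    HasDerivAt (fun z => Ring.inverse (u z))
      (-(Ring.inverse (u x) * u' * Ring.inverse (u x))) x := by
  obtain ⟨w, hw⟩ := hux
  have hf := hasFDerivAt_ringInverse (𝕜 := ℂ) (R := R) w
  rw [hw] at hf
  have hcomp := (hf.restrictScalars ℝ).comp_hasDerivAt x hu
  refine hcomp.congr_deriv (Eq.symm ?_)
  have hGi : Ring.inverse (u x) = (↑w⁻¹ : R) := by rw [← hw, Ring.inverse_unit]
  rw [hGi]
  simp



section Alg
variable {R : Type*} [Ring R]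

lemma alg_core (a e f g k r : R)
    (hae : a * e = e * a) (haf : a * f = f * a)
    (hg1 : g * (1 + r) = 1) (h1g : (1 + r) * g = 1)
    (hstar : a * r + r * a = e * k * e) :
    a * a * (e * g * f) - (e * g * f) * (a * a)
      = (e * g * e) * (k * a) * (e * g * f) - (e * g * e) * (a * k) * (e * g * f) := by
  have h2e : a * a * e = e * (a * a) := by
    calc a * a * e = a * (a * e) := by noncomm_ring
      _ = a * (e * a) := by rw [hae]
      _ = (a * e) * a := by noncomm_ring
      _ = (e * a) * a := by rw [hae]
      _ = e * (a * a) := by noncomm_ring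
  have h2f : f * (a * a) = (a * a) * f := by
    calc f * (a * a) = (f * a) * a := by noncomm_ring
      _ = (a * f) * a := by rw [haf]
      _ = a * (f * a) := by noncomm_ring
      _ = a * (a * f) := by rw [haf]
      _ = (a * a) * f := by noncomm_ring
  have hkey0 : (e * k * e) * a - a * (e * k * e) = (1 + r) * (a * a) - (a * a) * (1 + r) := by
    rw [← hstar]; noncomm_ring
  have keyA : a * a * g - g * (a * a) = g * ((e * k * e) * a - a * (e * k * e)) * g := by
    rw [hkey0]
    symm
    calc g * ((1 + r) * (a * a) - (a * a) * (1 + r)) * g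
        = (g * (1 + r)) * ((a * a) * g) - (g * (a * a)) * ((1 + r) * g) := by noncomm_ring
      _ = a * a * g - g * (a * a) := by rw [hg1, h1g, one_mul, mul_one]
  have hkea : (e * k * e) * a = e * (k * a) * e := by
    calc (e * k * e) * a = (e * k) * (e * a) := by noncomm_ring
      _ = (e * k) * (a * e) := by rw [hae]
      _ = e * (k * a) * e := by noncomm_ring
  have haek : a * (e * k * e) = e * (a * k) * e := by
    calc a * (e * k * e) = (a * e) * (k * e) := by noncomm_ring
      _ = (e * a) * (k * e) := by rw [hae]
      _ = e * (a * k) * e := by noncomm_ring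
  have hA1 : a * a * (e * g * f) = e * (a * a * g) * f := by
    calc a * a * (e * g * f) = (a * a * e) * (g * f) := by noncomm_ring
      _ = (e * (a * a)) * (g * f) := by rw [h2e]
      _ = e * (a * a * g) * f := by noncomm_ring
  have hA2 : (e * g * f) * (a * a) = e * (g * (a * a)) * f := by
    calc (e * g * f) * (a * a) = (e * g) * (f * (a * a)) := by noncomm_ring
      _ = (e * g) * ((a * a) * f) := by rw [h2f]
      _ = e * (g * (a * a)) * f := by noncomm_ring
  calc a * a * (e * g * f) - (e * g * f) * (a * a)
      = e * (a * a * g) * f - e * (g * (a * a)) * f := by rw [hA1, hA2]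
    _ = e * (a * a * g - g * (a * a)) * f := by noncomm_ring
    _ = e * (g * ((e * k * e) * a - a * (e * k * e)) * g) * f := by rw [keyA]
    _ = e * (g * (e * (k * a) * e - e * (a * k) * e) * g) * f := by rw [hkea, haek]
    _ = (e * g * e) * (k * a) * (e * g * f) - (e * g * e) * (a * k) * (e * g * f) := by
        noncomm_ring

end Alg

section Alg2
variable {R : Type*} [Ring R]

lemma comm_sq (a f : R) (haf : a * f = f * a) : (a * a) * f = f * (a * a) := by
  calc (a * a) * f = a * (a * f) := by noncomm_ring
    _ = a * (f * a) := by rw [haf]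
    _ = (a * f) * a := by noncomm_ring
    _ = (f * a) * a := by rw [haf]
    _ = f * (a * a) := by noncomm_ring

lemma alg_main (a e f g k r : R)
    (hae : a * e = e * a) (haf : a * f = f * a)
    (hg1 : g * (1 + r) = 1) (h1g : (1 + r) * g = 1)
    (hstar : a * r + r * a = e * k * e) :
    -(((-(a * -(a * e)) * g + -(a * e) * (g * (e * k * e) * g)) +
        (-(a * e) * (g * (e * k * e) * g) +
          e * ((g * (e * k * e) * g * (e * k * e) +
                g * (-(a * e) * k * e + e * k * -(a * e))) * g +
               g * (e * k * e) * (g * (e * k * e) * g)))) * f)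
      - -((e * g) * -(a * -(a * f)))
    = -(((-(a * e) * g + e * (g * (e * k * e) * g)) * e + (e * g) * -(a * e)) * k * ((e * g) * f)
        + ((-(a * e) * g + e * (g * (e * k * e) * g)) * e + (e * g) * -(a * e)) * k
            * ((e * g) * f)) := by
  have core := alg_core a e f g k r hae haf hg1 h1g hstar
  have hgecom : (e * g) * -(a * e) = -((e * g * e) * a) := by
    rw [hae]; noncomm_ring
  have hw1com : -(a * e) * k * e = -(e * a) * k * e := by rw [hae]
  have hfacom : (e * g) * -(a * -(a * f)) = (e * g * f) * (a * a) := by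
    calc (e * g) * -(a * -(a * f)) = (e * g) * ((a * a) * f) := by noncomm_ring
      _ = (e * g) * (f * (a * a)) := by rw [comm_sq a f haf]
      _ = (e * g * f) * (a * a) := by noncomm_ring
  rw [← sub_eq_zero]
  have hdiff :
      -(((-(a * -(a * e)) * g + -(a * e) * (g * (e * k * e) * g)) +
        (-(a * e) * (g * (e * k * e) * g) +
          e * ((g * (e * k * e) * g * (e * k * e) +
                g * (-(a * e) * k * e + e * k * -(a * e))) * g +
               g * (e * k * e) * (g * (e * k * e) * g)))) * f)
      - -((e * g) * -(a * -(a * f)))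
      - -(((-(a * e) * g + e * (g * (e * k * e) * g)) * e + (e * g) * -(a * e)) * k
            * ((e * g) * f)
          + ((-(a * e) * g + e * (g * (e * k * e) * g)) * e + (e * g) * -(a * e)) * k
            * ((e * g) * f))
      = ((e * g * e) * (k * a) * (e * g * f) - (e * g * e) * (a * k) * (e * g * f))
        - (a * a * (e * g * f) - (e * g * f) * (a * a)) := by
    rw [hgecom, hw1com, hfacom]
    noncomm_ring
  rw [hdiff, ← core]
  exact sub_self _

end Alg2



end Aux

/-- With `B : ℂᴺ → H`, `C : H → ℂᴺ`, `R_x` as above invertible plus `I` on an open interval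
`J ⊆ (0,∞)`, the `N×N`-matrix-valued function
`T(x,y) = −C·exp(−xA)·(I + R_x)⁻¹·exp(−yA)·B` is twice differentiable in each variable,
its diagonal `D(x) = T(x,x)` is differentiable, and `T` satisfies
`∂²T/∂x² − ∂²T/∂y² = −2·D′(x)·T(x,y)` for `x ∈ J`, `y > x`. -/

theorem matrix_tau_wave_equation
    {H : Type*} [NormedAddCommGroup H] [InnerProductSpace ℂ H] [CompleteSpace H]
    (N : ℕ) (hN : 0 < N)
    (A : H →L[ℂ] H) (B : EuclideanSpace ℂ (Fin N) →L[ℂ] H)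
    (C : H →L[ℂ] EuclideanSpace ℂ (Fin N))
    (M ε : ℝ) (hM : 0 < M) (hε : 0 < ε)
    (hdecay : ∀ t : ℝ, 0 ≤ t → ‖expA A t‖ ≤ M * Real.exp (-ε * t))
    (J : Set ℝ) (hJopen : IsOpen J) (hJsub : J ⊆ Set.Ioi (0 : ℝ))
    (hinv : ∀ x ∈ J, IsUnit (1 + Rop A (B ∘L C) x))
    (T : ℝ → ℝ → EuclideanSpace ℂ (Fin N) →L[ℂ] EuclideanSpace ℂ (Fin N))
    (hT : ∀ x y : ℝ, T x y =
      -(C ∘L expA A x ∘L Ring.inverse (1 + Rop A (B ∘L C) x) ∘L expA A y ∘L B)) :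
    ∃ Tx Txx Ty Tyy :
        ℝ → ℝ → EuclideanSpace ℂ (Fin N) →L[ℂ] EuclideanSpace ℂ (Fin N),
      ∃ D' : ℝ → EuclideanSpace ℂ (Fin N) →L[ℂ] EuclideanSpace ℂ (Fin N),
        (∀ x ∈ J, ∀ y : ℝ, 0 < y →
          HasDerivAt (fun x' : ℝ => T x' y) (Tx x y) x ∧
          HasDerivAt (fun x' : ℝ => Tx x' y) (Txx x y) x ∧
          HasDerivAt (fun y' : ℝ => T x y') (Ty x y) y ∧
          HasDerivAt (fun y' : ℝ => Ty x y') (Tyy x y) y) ∧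
        (∀ x ∈ J, HasDerivAt (fun s : ℝ => T s s) (D' x) x) ∧
        (∀ x ∈ J, ∀ y : ℝ, x < y →
          Txx x y - Tyy x y = (-2 : ℂ) • (D' x * T x y)) := by
  classical
  let Ψ : (H →L[ℂ] H) →L[ℂ] (EuclideanSpace ℂ (Fin N) →L[ℂ] EuclideanSpace ℂ (Fin N)) :=
    (ContinuousLinearMap.compL ℂ (EuclideanSpace ℂ (Fin N)) H (EuclideanSpace ℂ (Fin N)) C).comp
      ((ContinuousLinearMap.compL ℂ (EuclideanSpace ℂ (Fin N)) H H).flip B)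
  have hΨmul : ∀ P Q : H →L[ℂ] H, Ψ P * Ψ Q = Ψ (P * (B ∘L C) * Q) := by
    intro P Q; rfl
  have hT' : ∀ x y : ℝ, T x y = -(Ψ (expA A x * Ring.inverse (1 + Rop A (B ∘L C) x) * expA A y)) := by
    intro x y; rw [hT]; rfl
  -- basic derivative facts
  have hEd : ∀ t : ℝ, HasDerivAt (expA A) (-(A * expA A t)) t := hasDerivAt_expA A
  have hEpd : ∀ t : ℝ, HasDerivAt (fun s : ℝ => -(A * expA A s)) (-(A * -(A * expA A t))) t :=
    fun t => ((hEd t).const_mul A).neg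
  have hWd : ∀ t : ℝ, HasDerivAt (fun s : ℝ => expA A s * (B ∘L C) * expA A s) (-(A * expA A t) * (B ∘L C) * expA A t + expA A t * (B ∘L C) * -(A * expA A t)) t :=
    fun t => ((hEd t).mul_const (B ∘L C)).mul (hEd t)
  have hGd : ∀ x ∈ J, HasDerivAt (fun z : ℝ => Ring.inverse (1 + Rop A (B ∘L C) z)) (Ring.inverse (1 + Rop A (B ∘L C) x) * (expA A x * (B ∘L C) * expA A x) * Ring.inverse (1 + Rop A (B ∘L C) x)) x := by
    intro x hx
    have hu : HasDerivAt (fun z : ℝ => 1 + Rop A (B ∘L C) z) (-(expA A x * (B ∘L C) * expA A x)) x :=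
      (hasDerivAt_Rop A (B ∘L C) hM hε hdecay x).const_add 1
    have h0 : HasDerivAt (fun z : ℝ => Ring.inverse (1 + Rop A (B ∘L C) z))
        (-(Ring.inverse (1 + Rop A (B ∘L C) x) * -(expA A x * (B ∘L C) * expA A x) * Ring.inverse (1 + Rop A (B ∘L C) x))) x :=
      hasDerivAt_ring_inverse_comp hu (hinv x hx)
    convert h0 using 1
    noncomm_ring
  have hG1d : ∀ x ∈ J, HasDerivAt (fun z : ℝ => (Ring.inverse (1 + Rop A (B ∘L C) z) * (expA A z * (B ∘L C) * expA A z) * Ring.inverse (1 + Rop A (B ∘L C) z))) (((Ring.inverse (1 + Rop A (B ∘L C) x) * (expA A x * (B ∘L C) * expA A x) * Ring.inverse (1 + Rop A (B ∘L C) x)) * (expA A x * (B ∘L C) * expA A x) + Ring.inverse (1 + Rop A (B ∘L C) x) * (-(A * expA A x) * (B ∘L C) * expA A x + expA A x * (B ∘L C) * -(A * expA A x))) * Ring.inverse (1 + Rop A (B ∘L C) x) + Ring.inverse (1 + Rop A (B ∘L C) x) * (expA A x * (B ∘L C) * expA A x) * (Ring.inverse (1 + Rop A (B ∘L C) x) *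 (expA A x * (B ∘L C) * expA A x) * Ring.inverse (1 + Rop A (B ∘L C) x))) x :=
    fun x hx => ((hGd x hx).mul (hWd x)).mul (hGd x hx)
  have hFd : ∀ x ∈ J, HasDerivAt (fun z : ℝ => expA A z * Ring.inverse (1 + Rop A (B ∘L C) z)) (-(A * expA A x) * Ring.inverse (1 + Rop A (B ∘L C) x) + expA A x * (Ring.inverse (1 + Rop A (B ∘L C) x) * (expA A x * (B ∘L C) * expA A x) * Ring.inverse (1 + Rop A (B ∘L C) x))) x :=
    fun x hx => (hEd x).mul (hGd x hx)
  have hF1d : ∀ x ∈ J, HasDerivAt (fun z : ℝ => (-(A * expA A z) * Ring.inverse (1 + Rop A (B ∘L C) z) + expA A z * (Ring.inverse (1 + Rop A (B ∘L C) z) * (expA A z * (B ∘L C) * expA A z) * Ring.inverse (1 + Rop A (B ∘L C) z)))) ((-(A * -(A * expA A x)) * Ring.inverse (1 + Rop A (B ∘L C) x) + -(A * expA A x) * (Ring.inverse (1 + Rop A (B ∘L C) x) * (expA A x * (B ∘L C) * expA A x) * Ring.inverse (1 + Rop A (B ∘L C) x))) + (-(A * expA A x) * (Ring.inverse (1 +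 Rop A (B ∘L C) x) * (expA A x * (B ∘L C) * expA A x) * Ring.inverse (1 + Rop A (B ∘L C) x)) + expA A x * (((Ring.inverse (1 + Rop A (B ∘L C) x) * (expA A x * (B ∘L C) * expA A x) * Ring.inverse (1 + Rop A (B ∘L C) x)) * (expA A x * (B ∘L C) * expA A x) + Ring.inverse (1 + Rop A (B ∘L C) x) * (-(A * expA A x) * (B ∘L C) * expA A x + expA A x * (B ∘L C) * -(A * expA A x))) * Ring.inverse (1 + Rop A (B ∘L C) x) + Ring.inverse (1 + Rop A (B ∘L C) x) * (expA A x * (B ∘L C) * expA A x) * (Ring.inverse (1 + Rop A (B ∘L C) x) * (expA A x * (B ∘L C) * expA A x) * Ring.inverse (1 + Rop A (B ∘L C) x))))) x :=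
    fun x hx => ((hEpd x).mul (hGd x hx)).add ((hEd x).mul (hG1d x hx))
  refine ⟨fun x y => -(Ψ ((-(A * expA A x) * Ring.inverse (1 + Rop A (B ∘L C) x) + expA A x * (Ring.inverse (1 + Rop A (B ∘L C) x) * (expA A x * (B ∘L C) * expA A x) * Ring.inverse (1 + Rop A (B ∘L C) x))) * expA A y)),
          fun x y => -(Ψ (((-(A * -(A * expA A x)) * Ring.inverse (1 + Rop A (B ∘L C) x) + -(A * expA A x) * (Ring.inverse (1 + Rop A (B ∘L C) x) * (expA A x * (B ∘L C) * expA A x) * Ring.inverse (1 + Rop A (B ∘L C) x))) + (-(A * expA A x) * (Ring.inverse (1 + Rop A (B ∘L C) x) * (expA A x * (B ∘L C) * expA A x) * Ring.inverse (1 + Rop A (B ∘L C) x)) + expA A x * (((Ring.inverse (1 + Rop A (B ∘L C) x) * (expA A x * (B ∘L C) * expA A x) * Ring.inverse (1 + Rop A (B ∘L C) x)) * (expA A x * (B ∘L C) * expA A x) + Ring.inverse (1 + Rop A (B ∘L C) x) * (-(A * expA A x) * (B ∘L C) * expA A x + expA A x * (B ∘L C) * -(A * expA A x))) * Ring.inverse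 (1 + Rop A (B ∘L C) x) + Ring.inverse (1 + Rop A (B ∘L C) x) * (expA A x * (B ∘L C) * expA A x) * (Ring.inverse (1 + Rop A (B ∘L C) x) * (expA A x * (B ∘L C) * expA A x) * Ring.inverse (1 + Rop A (B ∘L C) x))))) * expA A y)),
          fun x y => -(Ψ ((expA A x * Ring.inverse (1 + Rop A (B ∘L C) x)) * -(A * expA A y))),
          fun x y => -(Ψ ((expA A x * Ring.inverse (1 + Rop A (B ∘L C) x)) * -(A * -(A * expA A y)))),
          fun x => -(Ψ ((-(A * expA A x) * Ring.inverse (1 + Rop A (B ∘L C) x) + expA A x * (Ring.inverse (1 + Rop A (B ∘L C) x) * (expA A x * (B ∘L C) * expA A x) * Ring.inverse (1 + Rop A (B ∘L C) x))) * expA A x + (expA A x * Ring.inverse (1 + Rop A (B ∘L C) x)) * -(A * expA A x))), ?_, ?_, ?_⟩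
  · intro x hx y _
    refine ⟨?_, ?_, ?_, ?_⟩
    · have hfun : (fun x' : ℝ => T x' y) = fun x' => -(Ψ (expA A x' * Ring.inverse (1 + Rop A (B ∘L C) x') * expA A y)) :=
        funext fun x' => hT' x' y
      rw [hfun]
      have hP : HasDerivAt (fun x' : ℝ => expA A x' * Ring.inverse (1 + Rop A (B ∘L C) x') * expA A y)
          ((-(A * expA A x) * Ring.inverse (1 + Rop A (B ∘L C) x) + expA A x * (Ring.inverse (1 + Rop A (B ∘L C) x) * (expA A x * (B ∘L C) * expA A x) * Ring.inverse (1 + Rop A (B ∘L C) x))) * expA A y) x := (hFd x hx).mul_const (expA A y)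
      exact ((Ψ.hasFDerivAt.restrictScalars ℝ).comp_hasDerivAt x hP).neg
    · have hP : HasDerivAt (fun x' : ℝ => (-(A * expA A x') * Ring.inverse (1 + Rop A (B ∘L C) x') + expA A x' * (Ring.inverse (1 + Rop A (B ∘L C) x') * (expA A x' * (B ∘L C) * expA A x') * Ring.inverse (1 + Rop A (B ∘L C) x'))) * expA A y)
          (((-(A * -(A * expA A x)) * Ring.inverse (1 + Rop A (B ∘L C) x) + -(A * expA A x) * (Ring.inverse (1 + Rop A (B ∘L C) x) * (expA A x * (B ∘L C) * expA A x) * Ring.inverse (1 + Rop A (B ∘L C) x))) + (-(A * expA A x) * (Ring.inverse (1 + Rop A (B ∘L C) x) * (expA A x * (B ∘L C) * expA A x) * Ring.inverse (1 + Rop A (B ∘L C) x)) + expA A x * (((Ring.inverse (1 + Rop A (B ∘L C) x) * (expA A x * (B ∘L C) * expA A x) * Ring.inverse (1 + Rop A (B ∘L C) x)) * (expA A x * (B ∘L C) * expA A x) + Ring.inverse (1 + Rop A (B ∘L C) x) * (-(A * expA A x) * (B ∘L C) * expA A x + expA A x * (B ∘L C) * -(A * expA A x))) * Ring.inverse (1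 + Rop A (B ∘L C) x) + Ring.inverse (1 + Rop A (B ∘L C) x) * (expA A x * (B ∘L C) * expA A x) * (Ring.inverse (1 + Rop A (B ∘L C) x) * (expA A x * (B ∘L C) * expA A x) * Ring.inverse (1 + Rop A (B ∘L C) x))))) * expA A y) x := (hF1d x hx).mul_const (expA A y)
      exact ((Ψ.hasFDerivAt.restrictScalars ℝ).comp_hasDerivAt x hP).neg
    · have hfun : (fun y' : ℝ => T x y') = fun y' => -(Ψ (expA A x * Ring.inverse (1 + Rop A (B ∘L C) x) * expA A y')) :=
        funext fun y' => hT' x y'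
      rw [hfun]
      have hP : HasDerivAt (fun y' : ℝ => expA A x * Ring.inverse (1 + Rop A (B ∘L C) x) * expA A y')
          ((expA A x * Ring.inverse (1 + Rop A (B ∘L C) x)) * -(A * expA A y)) y := (hEd y).const_mul (expA A x * Ring.inverse (1 + Rop A (B ∘L C) x))
      exact ((Ψ.hasFDerivAt.restrictScalars ℝ).comp_hasDerivAt y hP).neg
    · have hP : HasDerivAt (fun y' : ℝ => (expA A x * Ring.inverse (1 + Rop A (B ∘L C) x)) * -(A * expA A y'))
          ((expA A x * Ring.inverse (1 + Rop A (B ∘L C) x)) * -(A * -(A * expA A y))) y := (hEpd y).const_mul (expA A x * Ring.inverse (1 + Rop A (B ∘L C) x))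
      exact ((Ψ.hasFDerivAt.restrictScalars ℝ).comp_hasDerivAt y hP).neg
  · intro x hx
    have hfun : (fun s : ℝ => T s s) = fun s => -(Ψ (expA A s * Ring.inverse (1 + Rop A (B ∘L C) s) * expA A s)) :=
      funext fun s => hT' s s
    rw [hfun]
    have hP : HasDerivAt (fun s : ℝ => expA A s * Ring.inverse (1 + Rop A (B ∘L C) s) * expA A s)
        ((-(A * expA A x) * Ring.inverse (1 + Rop A (B ∘L C) x) + expA A x * (Ring.inverse (1 + Rop A (B ∘L C) x) * (expA A x * (B ∘L C) * expA A x) * Ring.inverse (1 + Rop A (B ∘L C) x))) * expA A x + (expA A x * Ring.inverse (1 + Rop A (B ∘L C) x)) * -(A * expA A x)) x := (hFd x hx).mul (hEd x)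
    exact ((Ψ.hasFDerivAt.restrictScalars ℝ).comp_hasDerivAt x hP).neg
  · intro x hx y _
    beta_reduce
    have hnn : (-(Ψ ((-(A * expA A x) * Ring.inverse (1 + Rop A (B ∘L C) x) + expA A x * (Ring.inverse (1 + Rop A (B ∘L C) x) * (expA A x * (B ∘L C) * expA A x) * Ring.inverse (1 + Rop A (B ∘L C) x))) * expA A x + (expA A x * Ring.inverse (1 + Rop A (B ∘L C) x)) * -(A * expA A x)))) * (-(Ψ ((expA A x * Ring.inverse (1 + Rop A (B ∘L C) x)) * expA A y)))
        = Ψ ((-(A * expA A x) * Ring.inverse (1 + Rop A (B ∘L C) x) + expA A x * (Ring.inverse (1 + Rop A (B ∘L C) x) * (expA A x * (B ∘L C) * expA A x) * Ring.inverse (1 + Rop A (B ∘L C) x))) * expA A x + (expA A x * Ring.inverse (1 + Rop A (B ∘L C) x)) * -(A * expA A x)) * Ψ ((expA A x * Ring.inverse (1 + Rop A (B ∘L C) x)) * expA A y) := by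
      ext v; simp; ring
    rw [hT' x y, hnn, hΨmul, ← map_neg Ψ, ← map_neg Ψ, ← map_sub Ψ, ← _root_.map_smul Ψ]
    have h2 : ((-2 : ℂ)) • (((-(A * expA A x) * Ring.inverse (1 + Rop A (B ∘L C) x) + expA A x * (Ring.inverse (1 + Rop A (B ∘L C) x) * (expA A x * (B ∘L C) * expA A x) * Ring.inverse (1 + Rop A (B ∘L C) x))) * expA A x + (expA A x * Ring.inverse (1 + Rop A (B ∘L C) x)) * -(A * expA A x)) * (B ∘L C) * ((expA A x * Ring.inverse (1 + Rop A (B ∘L C) x)) * expA A y))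
        = -((((-(A * expA A x) * Ring.inverse (1 + Rop A (B ∘L C) x) + expA A x * (Ring.inverse (1 + Rop A (B ∘L C) x) * (expA A x * (B ∘L C) * expA A x) * Ring.inverse (1 + Rop A (B ∘L C) x))) * expA A x + (expA A x * Ring.inverse (1 + Rop A (B ∘L C) x)) * -(A * expA A x)) * (B ∘L C) * ((expA A x * Ring.inverse (1 + Rop A (B ∘L C) x)) * expA A y))
            + (((-(A * expA A x) * Ring.inverse (1 + Rop A (B ∘L C) x) + expA A x * (Ring.inverse (1 + Rop A (B ∘L C) x) * (expA A x * (B ∘L C) * expA A x) * Ring.inverse (1 + Rop A (B ∘L C) x))) * expA A x + (expA A x * Ring.inverse (1 + Rop A (B ∘L C) x)) * -(A * expA A x)) * (B ∘L C) * ((expA A x * Ring.inverse (1 + Rop A (B ∘L C) x)) * expA A y))) := by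
      rw [neg_smul, two_smul]
    rw [h2]
    exact congrArg Ψ (alg_main A (expA A x) (expA A y) (Ring.inverse (1 + Rop A (B ∘L C) x)) (B ∘L C)
      (Rop A (B ∘L C) x) (commA A x) (commA A y)
      (Ring.inverse_mul_cancel _ (hinv x hx)) (Ring.mul_inverse_cancel _ (hinv x hx))
      (star_Rop A (B ∘L C) hM hε hdecay x))
end

section
/- Under the stated hypotheses, suppose both I + R_x and I − R_x are invertible for all x in an open interval J. Then the scalar function W(x) = C(exp(−xA)·(I − R_x²)⁻¹·R_x·exp(−xA)·b) is differentiable on J and satisfies W′(x) = −2·V(x)², where V(x) = −C(exp(−xA)·(I − R_x²)⁻¹·exp(−xA)·b). -/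
open MeasureTheory

set_option synthInstance.maxHeartbeats 1000000
set_option maxHeartbeats 1000000

section Aux

variable {H : Type*} [NormedAddCommGroup H] [InnerProductSpace ℂ H] [CompleteSpace H]

lemma expA_eq_real (A : H →L[ℂ] H) (t : ℝ) :
    expA A t = NormedSpace.exp (t • (-A)) := by
  rw [expA]
  congr 1
  rw [smul_neg, ← neg_smul]
  norm_num [← Complex.coe_smul]

lemma expA_hasDerivAt (A : H →L[ℂ] H) (t : ℝ) :
    HasDerivAt (expA A) (expA A t * -A) t := by
  have h := hasDerivAt_exp_smul_const (𝕂 := ℝ) (-A) t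
  simp only [← expA_eq_real] at h
  exact h

lemma expA_comm (A : H →L[ℂ] H) (t : ℝ) : A * expA A t = expA A t * A := by
  rw [expA_eq_real]
  have : Commute A (t • (-A)) := by
    simp [Commute, SemiconjBy, smul_neg, mul_smul_comm, smul_mul_assoc]
  exact (this.exp_right).eq

lemma expA_continuous (A : H →L[ℂ] H) : Continuous (expA A) :=
  continuous_iff_continuousAt.2 fun t => (expA_hasDerivAt A t).continuousAt

variable (A B : H →L[ℂ] H) {M ε : ℝ}

/-- The integrand. -/
noncomputable def fop (t : ℝ) : H →L[ℂ] H := expA A t * B * expA A t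

lemma fop_cont : Continuous (fop A B) :=
  ((expA_continuous A).mul continuous_const).mul (expA_continuous A)

lemma fop_norm_le (hM : 0 < M) (hε : 0 < ε)
    (hdecay : ∀ t : ℝ, 0 ≤ t → ‖expA A t‖ ≤ M * Real.exp (-ε * t)) (t : ℝ) (ht : 0 ≤ t) :
    ‖fop A B t‖ ≤ ‖B‖ * M * M * Real.exp (-(2 * ε) * t) := by
  have h1 : ‖expA A t‖ ≤ M * Real.exp (-ε * t) := hdecay t ht
  have h0 : (0:ℝ) ≤ ‖expA A t‖ := norm_nonneg _
  have hB : (0:ℝ) ≤ ‖B‖ := norm_nonneg _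
  have hexp : Real.exp (-ε * t) * Real.exp (-ε * t) = Real.exp (-(2 * ε) * t) := by
    rw [← Real.exp_add]; ring_nf
  calc ‖fop A B t‖ ≤ ‖expA A t * B‖ * ‖expA A t‖ := norm_mul_le _ _
  _ ≤ ‖expA A t‖ * ‖B‖ * ‖expA A t‖ :=
      mul_le_mul_of_nonneg_right (norm_mul_le _ _) h0
  _ ≤ (M * Real.exp (-ε * t)) * ‖B‖ * (M * Real.exp (-ε * t)) := by
      apply mul_le_mul (mul_le_mul_of_nonneg_right h1 hB) h1 h0
      positivity
  _ = ‖B‖ * M * M * Real.exp (-(2 * ε) * t) := by rw [← hexp]; ring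

lemma fop_integrableOn (hM : 0 < M) (hε : 0 < ε)
    (hdecay : ∀ t : ℝ, 0 ≤ t → ‖expA A t‖ ≤ M * Real.exp (-ε * t)) {a : ℝ} (ha : 0 ≤ a) :
    IntegrableOn (fop A B) (Set.Ioi a) := by
  apply Integrable.mono' ((exp_neg_integrableOn_Ioi a (by positivity : (0:ℝ) < 2 * ε)).const_mul
    (‖B‖ * M * M))
  · exact (fop_cont A B).aestronglyMeasurable.restrict
  · refine (ae_restrict_iff' measurableSet_Ioi).2 (ae_of_all _ fun t ht => ?_)
    exact fop_norm_le A B hM hε hdecay t (ha.trans (le_of_lt ht))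

lemma fop_tendsto_zero (hM : 0 < M) (hε : 0 < ε)
    (hdecay : ∀ t : ℝ, 0 ≤ t → ‖expA A t‖ ≤ M * Real.exp (-ε * t)) :
    Filter.Tendsto (fop A B) Filter.atTop (nhds 0) := by
  refine squeeze_zero_norm' (a := fun t => ‖B‖ * M * M * Real.exp (-(2 * ε) * t)) ?_ ?_
  · filter_upwards [Filter.eventually_ge_atTop (0:ℝ)] with t ht
    exact fop_norm_le A B hM hε hdecay t ht
  · have h1 : Filter.Tendsto (fun t : ℝ => (2 * ε) * t) Filter.atTop Filter.atTop :=
      Filter.Tendsto.const_mul_atTop (by positivity) Filter.tendsto_id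
    have h2 := Real.tendsto_exp_neg_atTop_nhds_zero.comp h1
    have h3 : (fun t : ℝ => Real.exp (-(2 * ε) * t)) =
        (fun x => Real.exp (-x)) ∘ (fun t : ℝ => (2 * ε) * t) := by
      funext t; simp [neg_mul]
    have h4 := h2.const_mul (‖B‖ * M * M)
    rw [mul_zero] at h4
    exact h4.congr (fun t => by simp [Function.comp, neg_mul])

lemma fop_deriv (t : ℝ) :
    HasDerivAt (fop A B) (-(A * fop A B t) - fop A B t * A) t := by
  have d1 := expA_hasDerivAt A t
  have h := (d1.mul_const B).mul d1
  have heq : expA A t * -A * B * expA A t + expA A t * B * (expA A t * -A)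
      = -(A * fop A B t) - fop A B t * A := by
    have hX : expA A t * -A = -(A * expA A t) := by rw [mul_neg, expA_comm]
    nth_rewrite 1 [hX]
    simp only [fop]
    noncomm_ring
  rw [heq] at h
  exact h

end Aux

section Aux2
variable {H : Type*} [NormedAddCommGroup H] [InnerProductSpace ℂ H] [CompleteSpace H]
variable (A B : H →L[ℂ] H) {M ε : ℝ}

lemma lyapunov (hM : 0 < M) (hε : 0 < ε)
    (hdecay : ∀ t : ℝ, 0 ≤ t → ‖expA A t‖ ≤ M * Real.exp (-ε * t)) {a : ℝ} (ha : 0 < a) :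
    A * Rop A B a + Rop A B a * A = fop A B a := by
  have h1 : IntegrableOn (fop A B) (Set.Ioi a) := fop_integrableOn A B hM hε hdecay ha.le
  have h2 := (ContinuousLinearMap.mul ℂ (H →L[ℂ] H) A).integrable_comp h1
  have h3 := ((ContinuousLinearMap.mul ℂ (H →L[ℂ] H)).flip A).integrable_comp h1
  have h2' : Integrable (fun t => A * fop A B t) (volume.restrict (Set.Ioi a)) := h2
  have h3' : Integrable (fun t => fop A B t * A) (volume.restrict (Set.Ioi a)) := h3
  have hint : IntegrableOn (fun t => -(A * fop A B t) - fop A B t * A) (Set.Ioi a) :=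
    h2'.neg.sub h3'
  have hkey := integral_Ioi_of_hasDerivAt_of_tendsto'
    (fun t _ => fop_deriv A B t) hint (fop_tendsto_zero A B hM hε hdecay)
  have h2n : Integrable (fun t => -(A * fop A B t)) (volume.restrict (Set.Ioi a)) := h2'.neg
  rw [integral_sub h2n h3', integral_neg] at hkey
  have e2 : (∫ t in Set.Ioi a, A * fop A B t) = A * Rop A B a :=
    (ContinuousLinearMap.mul ℂ (H →L[ℂ] H) A).integral_comp_comm h1
  have e3 : (∫ t in Set.Ioi a, fop A B t * A) = Rop A B a * A :=
    ((ContinuousLinearMap.mul ℂ (H →L[ℂ] H)).flip A).integral_comp_comm h1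
  rw [e2, e3, zero_sub] at hkey
  calc A * Rop A B a + Rop A B a * A = -(-(A * Rop A B a) - Rop A B a * A) := by abel
  _ = fop A B a := by rw [hkey]; exact neg_neg _

lemma Rop_hasDerivAt (hM : 0 < M) (hε : 0 < ε)
    (hdecay : ∀ t : ℝ, 0 ≤ t → ‖expA A t‖ ≤ M * Real.exp (-ε * t)) {x : ℝ} (hx : 0 < x) :
    HasDerivAt (Rop A B) (-(fop A B x)) x := by
  set a := x/2 with ha_def
  have ha : 0 < a := by positivity
  have hax : a < x := by rw [ha_def]; linarith
  have hIoi := fop_integrableOn A B hM hε hdecay ha.le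
  have heq : ∀ y ∈ Set.Ioi a, Rop A B y = Rop A B a - ∫ t in a..y, fop A B t := by
    intro y hy
    have hle : a ≤ y := le_of_lt hy
    rw [intervalIntegral.integral_of_le hle]
    have hRa : Rop A B a = ∫ t in Set.Ioi a, fop A B t := rfl
    have hRy : Rop A B y = ∫ t in Set.Ioi y, fop A B t := rfl
    have hsplit : (∫ t in Set.Ioi a, fop A B t)
        = (∫ t in Set.Ioc a y, fop A B t) + ∫ t in Set.Ioi y, fop A B t := by
      rw [← setIntegral_union (Set.Ioc_disjoint_Ioi le_rfl) measurableSet_Ioi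
        (hIoi.mono_set Set.Ioc_subset_Ioi_self) (hIoi.mono_set (Set.Ioi_subset_Ioi hle)),
        Set.Ioc_union_Ioi_eq_Ioi hle]
    rw [hRa, hRy, hsplit]
    abel
  have hFTC := intervalIntegral.integral_hasDerivAt_right
    ((fop_cont A B).intervalIntegrable a x)
    ((fop_cont A B).stronglyMeasurableAtFilter _ _)
    (fop_cont A B).continuousAt
  have h2 := hFTC.const_sub (Rop A B a)
  apply h2.congr_of_eventuallyEq
  filter_upwards [Ioi_mem_nhds hax] with y hy using heq y hy

end Aux2

/-- Pure ring computation for the derivative of `W`. -/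
lemma ringCalcW {Λ : Type*} [Ring Λ] (E P R S A : Λ)
    (hPu : P * (1 - R * R) = 1) (huP : (1 - R * R) * P = 1)
    (hS : A * R + R * A = S) (hAE : A * E = E * A) :
    ((E * -A * P + E * -(P * (S * R + R * S) * P)) * R + E * P * -S) * E
      + E * P * R * (E * -A)
      = -(E * (P * (S * (P * E)))) - E * (P * (S * (P * E))) := by
  have hRu : R * (1 - R * R) = (1 - R * R) * R := by noncomm_ring
  have hPR : P * R = R * P := by
    calc P * R = P * R * ((1 - R * R) * P) := by rw [huP, mul_one]
    _ = P * (R * (1 - R * R)) * P := by noncomm_ring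
    _ = P * ((1 - R * R) * R) * P := by rw [hRu]
    _ = (P * (1 - R * R)) * (R * P) := by noncomm_ring
    _ = R * P := by rw [hPu, one_mul]
  have hc' : (1 - R * R) * A + R * S = A * (1 - R * R) + S * R := by
    rw [← hS]; noncomm_ring
  have eAP : A * P = P * ((1 - R * R) * A) * P := by
    calc A * P = (P * (1 - R * R)) * (A * P) := by rw [hPu, one_mul]
    _ = P * ((1 - R * R) * A) * P := by noncomm_ring
  have hd : A * P + P * (R * S) * P = P * A + P * (S * R) * P := by
    calc A * P + P * (R * S) * P = P * ((1 - R * R) * A) * P + P * (R * S) * P := by rw [eAP]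
    _ = P * ((1 - R * R) * A + R * S) * P := by noncomm_ring
    _ = P * (A * (1 - R * R) + S * R) * P := by rw [hc']
    _ = (P * A) * ((1 - R * R) * P) + P * (S * R) * P := by noncomm_ring
    _ = P * A + P * (S * R) * P := by rw [huP, mul_one]
  have hP1 : 1 + R * (P * R) = P := by
    calc 1 + R * (P * R) = P * (1 - R * R) + R * (P * R) := by rw [hPu]
    _ = P * (1 - R * R) + (R * P) * R := by noncomm_ring
    _ = P * (1 - R * R) + (P * R) * R := by rw [hPR]
    _ = P := by noncomm_ring
  have key : A * P * R + P * (S * R + R * S) * P * R + P * S + P * R * A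
      = P * (S * P) + P * (S * P) := by
    calc A * P * R + P * (S * R + R * S) * P * R + P * S + P * R * A
        = (A * P + P * (R * S) * P) * R + P * (S * R) * P * R + P * S + P * R * A := by
          noncomm_ring
    _ = (P * A + P * (S * R) * P) * R + P * (S * R) * P * R + P * S + P * R * A := by rw [hd]
    _ = P * (A * R + R * A) + (P * (S * (R * (P * R))) + P * (S * (R * (P * R)))) + P * S := by
          noncomm_ring
    _ = P * S + (P * (S * (R * (P * R))) + P * (S * (R * (P * R)))) + P * S := by rw [hS]
    _ = P * (S * (1 + R * (P * R))) + P * (S * (1 + R * (P * R))) := by noncomm_ring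
    _ = P * (S * P) + P * (S * P) := by rw [hP1]
  have hEA' : E * -A = -A * E := by rw [mul_neg, neg_mul, hAE]
  nth_rewrite 2 [hEA']
  calc ((E * -A * P + E * -(P * (S * R + R * S) * P)) * R + E * P * -S) * E
      + E * P * R * (-A * E)
      = -(E * (A * P * R + P * (S * R + R * S) * P * R + P * S + P * R * A) * E) := by
        noncomm_ring
  _ = -(E * (P * (S * P) + P * (S * P)) * E) := by rw [key]
  _ = -(E * (P * (S * (P * E)))) - E * (P * (S * (P * E))) := by noncomm_ring

section Aux3
variable {H : Type*} [NormedAddCommGroup H] [InnerProductSpace ℂ H] [CompleteSpace H]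
variable (A B : H →L[ℂ] H) {M ε : ℝ}

lemma Fop_hasDerivAt (hM : 0 < M) (hε : 0 < ε)
    (hdecay : ∀ t : ℝ, 0 ≤ t → ‖expA A t‖ ≤ M * Real.exp (-ε * t)) {x : ℝ} (hx : 0 < x)
    (hu : IsUnit (1 - Rop A B x * Rop A B x)) :
    HasDerivAt (fun y => expA A y * Ring.inverse (1 - Rop A B y * Rop A B y)
        * Rop A B y * expA A y)
      (-(expA A x * (Ring.inverse (1 - Rop A B x * Rop A B x) * (fop A B x *
          (Ring.inverse (1 - Rop A B x * Rop A B x) * expA A x))))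
        - expA A x * (Ring.inverse (1 - Rop A B x * Rop A B x) * (fop A B x *
          (Ring.inverse (1 - Rop A B x * Rop A B x) * expA A x)))) x := by
  have hEx := expA_hasDerivAt A x
  have hRx := Rop_hasDerivAt A B hM hε hdecay hx
  have hg : HasDerivAt (fun y => 1 - Rop A B y * Rop A B y)
      (fop A B x * Rop A B x + Rop A B x * fop A B x) x := by
    have h := (hRx.mul hRx).const_sub 1
    have e : -(-(fop A B x) * Rop A B x + Rop A B x * -(fop A B x))
        = fop A B x * Rop A B x + Rop A B x * fop A B x := by noncomm_ring
    rwa [e] at h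
  have hU : ((hu.unit : (H →L[ℂ] H)ˣ) : H →L[ℂ] H) = 1 - Rop A B x * Rop A B x := hu.unit_spec
  have hPeq : ((hu.unit⁻¹ : (H →L[ℂ] H)ˣ) : H →L[ℂ] H)
      = Ring.inverse (1 - Rop A B x * Rop A B x) := by
    rw [← Ring.inverse_unit, hU]
  have hinv := hasFDerivAt_ringInverse (𝕜 := ℝ) hu.unit
  rw [hU] at hinv
  have hPx : HasDerivAt (fun y => Ring.inverse (1 - Rop A B y * Rop A B y))
      (-(Ring.inverse (1 - Rop A B x * Rop A B x)
          * (fop A B x * Rop A B x + Rop A B x * fop A B x)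
          * Ring.inverse (1 - Rop A B x * Rop A B x))) x := by
    have h := hinv.comp_hasDerivAt x hg
    simp only [ContinuousLinearMap.neg_apply, ContinuousLinearMap.mulLeftRight_apply,
      hPeq] at h
    exact h
  have hF := ((hEx.mul hPx).mul hRx).mul hEx
  have hPu : Ring.inverse (1 - Rop A B x * Rop A B x) * (1 - Rop A B x * Rop A B x) = 1 :=
    Ring.inverse_mul_cancel _ hu
  have huP : (1 - Rop A B x * Rop A B x) * Ring.inverse (1 - Rop A B x * Rop A B x) = 1 :=
    Ring.mul_inverse_cancel _ hu
  have hcalc := ringCalcW (expA A x) (Ring.inverse (1 - Rop A B x * Rop A B x)) (Rop A B x)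
    (fop A B x) A hPu huP (lyapunov A B hM hε hdecay hx) (expA_comm A x)
  simp only [Pi.mul_apply] at hF
  rw [hcalc] at hF
  exact hF

end Aux3


/-- With the rank-one operator `BC : v ↦ C(v)·b` and `R_x` as above, if both `I + R_x` and
`I − R_x` are invertible for all `x` in an open interval `J`, then
`W(x) = C(exp(−xA)·(I − R_x²)⁻¹·R_x·exp(−xA)·b)` is differentiable on `J` and satisfies
`W′(x) = −2·V(x)²`, where `V(x) = −C(exp(−xA)·(I − R_x²)⁻¹·exp(−xA)·b)`. -/
theorem derivative_of_W
    {H : Type*} [NormedAddCommGroup H] [InnerProductSpace ℂ H] [CompleteSpace H]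
    (A : H →L[ℂ] H) (b : H) (C : H →L[ℂ] ℂ)
    (M ε : ℝ) (hM : 0 < M) (hε : 0 < ε)
    (hdecay : ∀ t : ℝ, 0 ≤ t → ‖expA A t‖ ≤ M * Real.exp (-ε * t))
    (J : Set ℝ) (hJopen : IsOpen J) (hJsub : J ⊆ Set.Ioi (0 : ℝ))
    (hinvp : ∀ x ∈ J, IsUnit (1 + Rop A (C.smulRight b) x))
    (hinvm : ∀ x ∈ J, IsUnit (1 - Rop A (C.smulRight b) x))
    (W : ℝ → ℂ)
    (hW : ∀ x : ℝ, W x = C ((expA A x *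
      Ring.inverse (1 - Rop A (C.smulRight b) x * Rop A (C.smulRight b) x) *
      Rop A (C.smulRight b) x * expA A x) b))
    (V : ℝ → ℂ)
    (hV : ∀ x : ℝ, V x = -(C ((expA A x *
      Ring.inverse (1 - Rop A (C.smulRight b) x * Rop A (C.smulRight b) x) *
      expA A x) b))) :
    ∀ x ∈ J, HasDerivAt W (-2 * (V x) ^ 2) x := by
  intro x hx
  have hx0 : (0:ℝ) < x := hJsub hx
  set B := C.smulRight b with hBdef
  have hu : IsUnit (1 - Rop A B x * Rop A B x) := by
    have h := (hinvm x hx).mul (hinvp x hx)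
    rwa [show (1 - Rop A B x) * (1 + Rop A B x) = 1 - Rop A B x * Rop A B x by
      noncomm_ring] at h
  have hF := Fop_hasDerivAt A B hM hε hdecay hx0 hu
  set Φ : (H →L[ℂ] H) →L[ℝ] ℂ :=
    (C.comp (ContinuousLinearMap.apply ℂ H b)).restrictScalars ℝ with hΦdef
  have hWder := Φ.hasFDerivAt.comp_hasDerivAt x hF
  have hWeq : W = fun y => Φ (expA A y * Ring.inverse (1 - Rop A B y * Rop A B y)
      * Rop A B y * expA A y) := by
    funext y
    rw [hW y]
    rfl
  rw [hWeq]
  refine hWder.congr_deriv ?_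
  rw [hV x]
  simp only [hΦdef, ContinuousLinearMap.coe_restrictScalars' (R := ℝ),
    ContinuousLinearMap.comp_apply, ContinuousLinearMap.apply_apply,
    map_sub, map_neg, ContinuousLinearMap.mul_apply, fop, hBdef,
    ContinuousLinearMap.smulRight_apply, _root_.map_smul, smul_eq_mul,
    ContinuousLinearMap.sub_apply, ContinuousLinearMap.neg_apply]
  ring
end
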